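/- Let P be an m×m Hermitian positive definite complex matrix, A a p×m complex matrix, a ∈ ℂᵖ, and σ > 0 a real number. Set R = A·P·Aᴴ + σ²·I_p and B = σ²·P⁻¹, let Ã = [a A] be the p×(m+1) matrix whose first column is a and whose remaining columns are A, and let B̃ be the (m+1)×(m+1) block-diagonal matrix with top-left scalar block 0 and bottom-right block B. Then R is invertible and aᴴ·R⁻¹·a = σ⁻² · det(Ãᴴ·Ã + B̃) / det(Aᴴ·A + B). -/

import Mathlib

open Matrix ComplexOrder in
private lemma smul_posDef' {n : Type*} [Fintype n] [DecidableEq n]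
    {Q : Matrix n n ℂ} (hQ : Q.PosDef) {σ : ℝ} (hσ : 0 < σ) :
    (((σ : ℂ) ^ 2) • Q).PosDef := by
  have hσ2 : (0 : ℂ) < (σ : ℂ) ^ 2 := by
    have : (0 : ℂ) < (σ : ℂ) := Complex.zero_lt_real.mpr hσ
    positivity
  refine ⟨?_, fun x hx => ?_⟩
  · rw [Matrix.IsHermitian, conjTranspose_smul, hQ.isHermitian.eq]
    congr 1
    simp [Complex.ext_iff]
  · exact (hQ.smul hσ2).2 hx

open Matrix ComplexOrder in
private lemma quad_entry {p : ℕ} (a : Fin p → ℂ) (N : Matrix (Fin p) (Fin p) ℂ) :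
    ((Matrix.of (fun i (_ : Unit) => a i))ᴴ * N * (Matrix.of (fun i (_ : Unit) => a i)))
        () () = star a ⬝ᵥ (N *ᵥ a) := by
  simp only [Matrix.mul_apply, dotProduct, mulVec, Matrix.conjTranspose_apply,
    Matrix.of_apply, Finset.sum_mul, Pi.star_apply]
  rw [Finset.sum_comm]
  exact Finset.sum_congr rfl fun i _ => by
    rw [Finset.mul_sum]
    exact Finset.sum_congr rfl fun j _ => by
      simp [dotProduct, Finset.sum_mul, mul_assoc]

open Matrix ComplexOrder in
/-- with `R = A·P·Aᴴ + σ²·I`, `B = σ²·P⁻¹`, `Ã = [a A]` (first column `a`,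
remaining columns `A`; columns indexed by `Unit ⊕ Fin m`, a type of cardinality `m+1`)
and `B̃ = blockdiag(0, B)`, the matrix `R` is invertible and
`aᴴ·R⁻¹·a = σ⁻²·det(Ãᴴ·Ã + B̃)/det(Aᴴ·A + B)`. -/
theorem quadratic_form_det_ratio (m p : ℕ)
    (P : Matrix (Fin m) (Fin m) ℂ) (hP : P.PosDef)
    (A : Matrix (Fin p) (Fin m) ℂ) (a : Fin p → ℂ) (σ : ℝ) (hσ : 0 < σ)
    (R : Matrix (Fin p) (Fin p) ℂ)
    (hR : R = A * P * Aᴴ + ((σ : ℂ) ^ 2) • (1 : Matrix (Fin p) (Fin p) ℂ))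
    (B : Matrix (Fin m) (Fin m) ℂ) (hB : B = ((σ : ℂ) ^ 2) • P⁻¹)
    (Atil : Matrix (Fin p) (Unit ⊕ Fin m) ℂ)
    (hAtil : ∀ i s, Atil i s = Sum.elim (fun _ : Unit => a i) (fun j => A i j) s)
    (Btil : Matrix (Unit ⊕ Fin m) (Unit ⊕ Fin m) ℂ)
    (hBtil : Btil = Matrix.fromBlocks (0 : Matrix Unit Unit ℂ) 0 0 B) :
    IsUnit R
    ∧ star a ⬝ᵥ (R⁻¹ *ᵥ a)
        = ((σ : ℂ) ^ 2)⁻¹ * (Atilᴴ * Atil + Btil).det / (Aᴴ * A + B).det := by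
  have hσ2 : ((σ : ℂ) ^ 2) ≠ 0 := by
    have : (σ : ℂ) ≠ 0 := by exact_mod_cast hσ.ne'
    positivity
  -- positive definiteness facts
  have hBpd : B.PosDef := hB ▸ smul_posDef' hP.inv hσ
  have hMpd : (Aᴴ * A + B).PosDef :=
    Matrix.PosDef.posSemidef_add (Matrix.posSemidef_conjTranspose_mul_self A) hBpd
  have hRpd : R.PosDef := by
    rw [hR]
    exact Matrix.PosDef.posSemidef_add (hP.posSemidef.mul_mul_conjTranspose_same A)
      (smul_posDef' Matrix.PosDef.one hσ)
  set M := Aᴴ * A + B with hM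
  have hPP : P * P⁻¹ = 1 := Matrix.mul_nonsing_inv P hP.det_pos.ne'.isUnit
  have hMM : M * M⁻¹ = 1 := Matrix.mul_nonsing_inv M hMpd.det_pos.ne'.isUnit
  -- push-through identity
  have hRA : R * A = A * P * M := by
    have h1 : A * P * ((σ : ℂ) ^ 2 • P⁻¹) = (σ : ℂ) ^ 2 • A := by
      rw [Matrix.mul_smul, Matrix.mul_assoc, hPP, Matrix.mul_one]
    rw [hR, hM, hB, Matrix.add_mul, Matrix.mul_add, h1, Matrix.smul_mul, Matrix.one_mul,
      Matrix.mul_assoc]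
  -- explicit inverse of R
  have hRX : R * (((σ : ℂ) ^ 2)⁻¹ • (1 - A * M⁻¹ * Aᴴ)) = 1 := by
    have h2 : R * (A * M⁻¹ * Aᴴ) = A * P * Aᴴ := by
      rw [← Matrix.mul_assoc, ← Matrix.mul_assoc, hRA, Matrix.mul_assoc (A * P) M M⁻¹, hMM,
        Matrix.mul_one]
    rw [Matrix.mul_smul, Matrix.mul_sub, Matrix.mul_one, h2, hR, add_sub_cancel_left,
      smul_smul, inv_mul_cancel₀ hσ2, one_smul]
  have hRinv : R⁻¹ = ((σ : ℂ) ^ 2)⁻¹ • (1 - A * M⁻¹ * Aᴴ) := Matrix.inv_eq_right_inv hRX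
  -- block structure
  set c : Matrix (Fin p) Unit ℂ := Matrix.of (fun i (_ : Unit) => a i) with hc
  have hAtilEq : Atil = Matrix.fromCols c A := by
    ext i s
    rw [hAtil]
    cases s <;> rfl
  haveI : Invertible M := hMpd.isUnit.invertible
  have hblock : Atilᴴ * Atil + Btil = Matrix.fromBlocks (cᴴ * c) (cᴴ * A) (Aᴴ * c) M := by
    rw [hAtilEq, hBtil, conjTranspose_fromCols_eq_fromRows_conjTranspose,
      fromRows_mul_fromCols, Matrix.fromBlocks_add]
    simp [hM]
  have hdet : (Atilᴴ * Atil + Btil).det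
      = M.det * (star a ⬝ᵥ a - star a ⬝ᵥ ((A * M⁻¹ * Aᴴ) *ᵥ a)) := by
    rw [hblock, Matrix.det_fromBlocks₂₂, Matrix.invOf_eq_nonsing_inv]
    congr 1
    rw [Matrix.det_unique]
    have h3 : cᴴ * A * M⁻¹ * (Aᴴ * c) = cᴴ * (A * M⁻¹ * Aᴴ) * c := by
      simp only [Matrix.mul_assoc]
    rw [Matrix.sub_apply, h3]
    have h4 := quad_entry a (A * M⁻¹ * Aᴴ)
    have h5 := quad_entry a 1
    simp only [← hc] at h4 h5
    have h5' : (cᴴ * c) default default = star a ⬝ᵥ a := by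
      have := h5
      rw [Matrix.mul_one] at this
      simpa using this
    have h4' : (cᴴ * (A * M⁻¹ * Aᴴ) * c) default default
        = star a ⬝ᵥ ((A * M⁻¹ * Aᴴ) *ᵥ a) := by simpa using h4
    rw [h5', h4']
  refine ⟨hRpd.isUnit, ?_⟩
  rw [hRinv, hdet]
  rw [smul_mulVec, dotProduct_smul, sub_mulVec, Matrix.one_mulVec, dotProduct_sub,
    smul_eq_mul]
  rw [mul_div_assoc, mul_comm M.det, mul_div_assoc, div_self hMpd.det_pos.ne', mul_one]
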